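/- Suppose the linear operator Φ satisfies the ℓ2/ℓ1 RIP: m_k‖v‖₂ ≤ (1/P)‖Φv‖₁ ≤ M_k‖v‖₂ on Σ_k for k ∈ {K', K+K'}, with (1/√2)m_{K+K'} − M_{K'}√(K/K') ≥ γ > 0. Let x ∈ ℝ^N, z = Φx + ξ with ‖ξ‖₁ ≤ ε, and let x̃ be any minimizer of ‖v‖₁ subject to ‖z − Φv‖₁ ≤ ε. Then ‖x − x̃‖₂ ≤ C₀·‖x − x_K‖₁/√K' + D₀·ε/P, where x_K is the best K-term approximation of x, C₀ = 2(√2+1)(M_{K'}/m_{K+K'}) + 2, and D₀ = 4(√2+1)/m_{K+K'} (with γ = m_{K+K'}/(2√2) when K' > 8(M_{K'}/m_{K+K'})²K). -/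

import Mathlib

open Finset

noncomputable section

/-- ℓ2 norm on `ℝ^N`. -/
def l2norm {N : ℕ} (v : Fin N → ℝ) : ℝ := Real.sqrt (∑ i, (v i) ^ 2)

/-- ℓ1 norm on `ℝ^N`. -/
def l1norm {N : ℕ} (v : Fin N → ℝ) : ℝ := ∑ i, |v i|

/-- ℓ1 norm on `ℂ^P`. -/
def l1normC {P : ℕ} (w : Fin P → ℂ) : ℝ := ∑ p, ‖w p‖

/-- `v` has at most `K` nonzero entries. -/
def IsSparse {N : ℕ} (K : ℕ) (v : Fin N → ℝ) : Prop := {i | v i ≠ 0}.ncard ≤ K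

lemma l1normC_nonneg {P : ℕ} (w : Fin P → ℂ) : 0 ≤ l1normC w :=
  Finset.sum_nonneg fun _ _ => norm_nonneg _

lemma l1normC_add_le {P : ℕ} (a b : Fin P → ℂ) : l1normC (a + b) ≤ l1normC a + l1normC b := by
  rw [l1normC, l1normC, l1normC, ← Finset.sum_add_distrib]
  exact Finset.sum_le_sum fun i _ => norm_add_le _ _

lemma l1normC_neg {P : ℕ} (a : Fin P → ℂ) : l1normC (-a) = l1normC a := by
  simp [l1normC]

lemma l1normC_sub_le {P : ℕ} (a b : Fin P → ℂ) : l1normC (a - b) ≤ l1normC a + l1normC b := by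
  have := l1normC_add_le a (-b)
  simpa [l1normC_neg, sub_eq_add_neg] using this

lemma l1normC_zero {P : ℕ} : l1normC (0 : Fin P → ℂ) = 0 := by simp [l1normC]

lemma l1normC_sum_le {P : ℕ} {ι : Type*} (s : Finset ι) (f : ι → Fin P → ℂ) :
    l1normC (∑ j ∈ s, f j) ≤ ∑ j ∈ s, l1normC (f j) := by
  classical
  induction s using Finset.cons_induction with
  | empty => simp [l1normC_zero]
  | cons a s ha ih =>
    rw [Finset.sum_cons, Finset.sum_cons]
    exact le_trans (l1normC_add_le _ _) (by linarith)

lemma l2norm_nonneg {N : ℕ} (v : Fin N → ℝ) : 0 ≤ l2norm v := Real.sqrt_nonneg _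

lemma l2norm_zero {N : ℕ} : l2norm (0 : Fin N → ℝ) = 0 := by simp [l2norm]

lemma l2norm_add_le {N : ℕ} (a b : Fin N → ℝ) : l2norm (a + b) ≤ l2norm a + l2norm b := by
  rw [l2norm, l2norm, l2norm]
  have hab : ∑ i, a i * b i ≤ Real.sqrt (∑ i, a i ^ 2) * Real.sqrt (∑ i, b i ^ 2) := by
    have h := Finset.sum_mul_sq_le_sq_mul_sq Finset.univ a b
    have h2 : ∑ i, a i * b i ≤ Real.sqrt ((∑ i, a i * b i) ^ 2) := by
      rw [Real.sqrt_sq_eq_abs]; exact le_abs_self _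
    refine h2.trans ?_
    rw [← Real.sqrt_mul (by positivity)]
    exact Real.sqrt_le_sqrt h
  have key : ∑ i, (a i + b i) ^ 2 ≤
      (Real.sqrt (∑ i, a i ^ 2) + Real.sqrt (∑ i, b i ^ 2)) ^ 2 := by
    have ha : Real.sqrt (∑ i, a i ^ 2) ^ 2 = ∑ i, a i ^ 2 := Real.sq_sqrt (by positivity)
    have hb : Real.sqrt (∑ i, b i ^ 2) ^ 2 = ∑ i, b i ^ 2 := Real.sq_sqrt (by positivity)
    have : ∑ i, (a i + b i) ^ 2 = ∑ i, a i ^ 2 + 2 * ∑ i, a i * b i + ∑ i, b i ^ 2 := by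
      rw [Finset.mul_sum, ← Finset.sum_add_distrib, ← Finset.sum_add_distrib]
      exact Finset.sum_congr rfl fun i _ => by ring
    rw [this, add_sq, ha, hb]; linarith
  calc Real.sqrt (∑ i, (a i + b i) ^ 2)
      ≤ Real.sqrt ((Real.sqrt (∑ i, a i ^ 2) + Real.sqrt (∑ i, b i ^ 2)) ^ 2) :=
        Real.sqrt_le_sqrt key
    _ = _ := Real.sqrt_sq (by positivity)

lemma l2norm_sum_le {N : ℕ} {ι : Type*} (s : Finset ι) (f : ι → Fin N → ℝ) :
    l2norm (∑ j ∈ s, f j) ≤ ∑ j ∈ s, l2norm (f j) := by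
  classical
  induction s using Finset.cons_induction with
  | empty => simp [l2norm_zero]
  | cons a s ha ih =>
    rw [Finset.sum_cons, Finset.sum_cons]
    exact le_trans (l2norm_add_le _ _) (by linarith)

lemma sum_abs_le_sqrt_card {N : ℕ} (S : Finset (Fin N)) (f : Fin N → ℝ) :
    ∑ i ∈ S, |f i| ≤ Real.sqrt S.card * Real.sqrt (∑ i ∈ S, f i ^ 2) := by
  have h : (∑ i ∈ S, |f i|) ^ 2 ≤ (S.card : ℝ) * ∑ i ∈ S, f i ^ 2 := by
    simpa [sq_abs] using sq_sum_le_card_mul_sum_sq (s := S) (f := fun i => |f i|)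
  calc ∑ i ∈ S, |f i| = Real.sqrt ((∑ i ∈ S, |f i|) ^ 2) :=
        (Real.sqrt_sq (by positivity)).symm
    _ ≤ Real.sqrt ((S.card : ℝ) * ∑ i ∈ S, f i ^ 2) := Real.sqrt_le_sqrt h
    _ = _ := Real.sqrt_mul (by positivity) _

lemma isSparse_of_support_subset {N k : ℕ} {v : Fin N → ℝ} {S : Finset (Fin N)}
    (h : ∀ i, v i ≠ 0 → i ∈ S) (hc : S.card ≤ k) : IsSparse k v := by
  have hsub : {i | v i ≠ 0} ⊆ (S : Set (Fin N)) := fun i hi => h i hi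
  calc {i | v i ≠ 0}.ncard ≤ (S : Set (Fin N)).ncard :=
        Set.ncard_le_ncard hsub S.finite_toSet
    _ = S.card := Set.ncard_coe_finset S
    _ ≤ k := hc

lemma abs_add_lower (a b : ℝ) : |a| - |b| ≤ |a + b| := by
  have h := abs_add_le (a + b) (-b)
  rw [add_neg_cancel_right, abs_neg] at h
  linarith

lemma abs_add_lower' (a b : ℝ) : |b| - |a| ≤ |a + b| := by
  rw [add_comm]; exact abs_add_lower b a

/-- Block decomposition of a vector into `K'`-sparse pieces sorted by decreasing magnitude,
with the tail blocks having small total ℓ2 norm. -/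
lemma block_decomposition {N K' : ℕ} (hK'pos : 0 < K') (f : Fin N → ℝ) :
    ∃ v : ℕ → Fin N → ℝ,
      (f = v 0 + ∑ j ∈ Finset.range (N / K'), v (j + 1)) ∧
      (∀ j, IsSparse K' (v j)) ∧
      (∀ j i, v j i = f i ∨ v j i = 0) ∧
      Real.sqrt K' * (∑ j ∈ Finset.range (N / K'), l2norm (v (j + 1))) ≤ l1norm f := by
  classical
  set π : Equiv.Perm (Fin N) := Tuple.sort (fun i => -|f i|) with hπ
  have hmono := Tuple.monotone_sort (fun i => -|f i|)
  rw [← hπ] at hmono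
  have hanti : ∀ p q : Fin N, p ≤ q → |f (π q)| ≤ |f (π p)| := by
    intro p q hpq
    have := hmono hpq
    simp only [Function.comp_apply] at this
    linarith
  set blk : Fin N → ℕ := fun i => (π.symm i : ℕ) / K' with hblk
  set v : ℕ → Fin N → ℝ := fun j i => if blk i = j then f i else 0 with hv
  set B : ℕ → Finset (Fin N) := fun j => Finset.univ.filter fun i => blk i = j with hB
  have hmemB : ∀ j i, i ∈ B j ↔ blk i = j := fun j i => by simp [hB]
  set a : ℕ → ℝ := fun j => ∑ i ∈ B j, |f i| with ha
  have hanonneg : ∀ j, 0 ≤ a j := fun j => Finset.sum_nonneg fun i _ => abs_nonneg _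
  have hblk_le : ∀ i, blk i ≤ N / K' := fun i =>
    Nat.div_le_div_right (le_of_lt (π.symm i).isLt)
  have hpt : ∀ i, (∑ j ∈ Finset.range (N / K' + 1), v j i) = f i := by
    intro i
    have : (∑ j ∈ Finset.range (N / K' + 1), v j i)
        = ∑ j ∈ Finset.range (N / K' + 1), if blk i = j then f i else 0 := rfl
    rw [this, Finset.sum_ite_eq]
    simp [Nat.lt_succ_of_le (hblk_le i)]
  have hcard : ∀ j, (B j).card ≤ K' := by
    intro j
    have hle : (B j).card ≤ (Finset.range K').card := by
      apply Finset.card_le_card_of_injOn (fun i => (π.symm i : ℕ) % K')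
      · intro i _
        exact Finset.mem_range.mpr (Nat.mod_lt _ hK'pos)
      · intro i1 h1 i2 h2 heq
        have hb1 : blk i1 = j := (hmemB j i1).mp (Finset.mem_coe.mp h1)
        have hb2 : blk i2 = j := (hmemB j i2).mp (Finset.mem_coe.mp h2)
        simp only [hblk] at hb1 hb2
        have hval : (π.symm i1 : ℕ) = (π.symm i2 : ℕ) := by
          have d1 := Nat.div_add_mod ((π.symm i1 : Fin N) : ℕ) K'
          have d2 := Nat.div_add_mod ((π.symm i2 : Fin N) : ℕ) K'
          have heq' : (π.symm i1 : ℕ) % K' = (π.symm i2 : ℕ) % K' := heq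
          rw [← d1, ← d2, hb1, hb2, heq']
        exact π.symm.injective (Fin.ext hval)
    simpa using hle
  have hfull : ∀ j, (B (j + 1)).Nonempty → K' ≤ (B j).card := by
    rintro j ⟨i0, hi0⟩
    have hb0 : blk i0 = j + 1 := (hmemB _ _).mp hi0
    have hge : (j + 1) * K' ≤ (π.symm i0 : ℕ) := by
      apply (Nat.le_div_iff_mul_le hK'pos).mp
      simp only [hblk] at hb0
      omega
    have hlt : ∀ t, t < K' → j * K' + t < N := by
      intro t ht
      have h1 : j * K' + t < (j + 1) * K' := by
        rw [Nat.succ_mul]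
        exact Nat.add_lt_add_left ht _
      exact lt_of_lt_of_le h1 (le_trans hge (le_of_lt (π.symm i0).isLt))
    have hinj : (Finset.range K').card ≤ (B j).card := by
      apply Finset.card_le_card_of_injOn
        (fun t => if ht : j * K' + t < N then π ⟨j * K' + t, ht⟩ else i0)
      · intro t htm
        have ht : t < K' := Finset.mem_range.mp htm
        simp only [Finset.mem_coe, dif_pos (hlt t ht)]
        rw [hmemB]
        simp only [hblk, Equiv.symm_apply_apply]
        show (j * K' + t) / K' = j
        rw [Nat.mul_comm j K', Nat.mul_add_div hK'pos]
        simp [Nat.div_eq_of_lt ht]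
      · intro t1 h1 t2 h2 heq
        have ht1 : t1 < K' := by simpa using h1
        have ht2 : t2 < K' := by simpa using h2
        dsimp only at heq
        rw [dif_pos (hlt t1 ht1), dif_pos (hlt t2 ht2)] at heq
        have h4 : j * K' + t1 = j * K' + t2 := congrArg Fin.val (π.injective heq)
        omega
    simpa using hinj
  have hkey : ∀ j i, i ∈ B (j + 1) → (K' : ℝ) * |f i| ≤ a j := by
    intro j i hi
    have hb : blk i = j + 1 := (hmemB _ _).mp hi
    have hle : ∀ i' ∈ B j, |f i| ≤ |f i'| := by
      intro i' hi'
      have hb' : blk i' = j := (hmemB _ _).mp hi'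
      simp only [hblk] at hb hb'
      have h1 : (π.symm i' : ℕ) < (j + 1) * K' := by
        apply (Nat.div_lt_iff_lt_mul hK'pos).mp
        omega
      have h2 : (j + 1) * K' ≤ (π.symm i : ℕ) := by
        apply (Nat.le_div_iff_mul_le hK'pos).mp
        omega
      have hpq : π.symm i' ≤ π.symm i := le_of_lt (by
        rw [Fin.lt_def]; exact lt_of_lt_of_le h1 h2)
      have := hanti (π.symm i') (π.symm i) hpq
      simpa using this
    have hfull' : K' ≤ (B j).card := hfull j ⟨i, hi⟩
    have hsum : (B j).card • |f i| ≤ ∑ i' ∈ B j, |f i'| :=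
      Finset.card_nsmul_le_sum _ _ _ hle
    rw [nsmul_eq_mul] at hsum
    calc (K' : ℝ) * |f i| ≤ ((B j).card : ℝ) * |f i| := by
          apply mul_le_mul_of_nonneg_right _ (abs_nonneg _)
          exact_mod_cast hfull'
      _ ≤ a j := hsum
  have hK'R : (0 : ℝ) < K' := by exact_mod_cast hK'pos
  have hl2blk : ∀ j, Real.sqrt K' * l2norm (v (j + 1)) ≤ a j := by
    intro j
    have hsum2 : ∑ i, (v (j + 1) i) ^ 2 ≤ (a j) ^ 2 / K' := by
      have hquad : ∀ i, (v (j + 1) i) ^ 2 ≤ (if blk i = j + 1 then (a j / K') ^ 2 else 0) := by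
        intro i
        by_cases hb : blk i = j + 1
        · have hv1 : v (j + 1) i = f i := by simp [hv, hb]
          have h1 : (K' : ℝ) * |f i| ≤ a j := hkey j i ((hmemB _ _).mpr hb)
          have h2 : |f i| ≤ a j / K' := by
            rw [le_div_iff₀ hK'R]; linarith [h1, mul_comm (K' : ℝ) |f i|]
          rw [hv1, if_pos hb]
          nlinarith [h2, abs_nonneg (f i), sq_abs (f i)]
        · simp [hv, hb]
      calc ∑ i, (v (j + 1) i) ^ 2
          ≤ ∑ i, (if blk i = j + 1 then (a j / K') ^ 2 else 0) :=
            Finset.sum_le_sum fun i _ => hquad i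
        _ = (B (j + 1)).card * (a j / K') ^ 2 := by
            rw [← Finset.sum_filter]
            rw [Finset.sum_const, nsmul_eq_mul]
        _ ≤ (K' : ℝ) * (a j / K') ^ 2 := by
            apply mul_le_mul_of_nonneg_right _ (by positivity)
            exact_mod_cast hcard (j + 1)
        _ = (a j) ^ 2 / K' := by field_simp
    have hl2v : l2norm (v (j + 1)) ≤ Real.sqrt ((a j) ^ 2 / K') := by
      rw [l2norm]
      exact Real.sqrt_le_sqrt hsum2
    calc Real.sqrt K' * l2norm (v (j + 1))
        ≤ Real.sqrt K' * Real.sqrt ((a j) ^ 2 / K') :=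
          mul_le_mul_of_nonneg_left hl2v (Real.sqrt_nonneg _)
      _ = Real.sqrt ((K' : ℝ) * ((a j) ^ 2 / K')) := (Real.sqrt_mul (by positivity) _).symm
      _ = Real.sqrt ((a j) ^ 2) := by congr 1; field_simp
      _ = a j := Real.sqrt_sq (hanonneg j)
  have hatotal : ∑ j ∈ Finset.range (N / K' + 1), a j = l1norm f := by
    have h1 : ∀ j, a j = ∑ i, if blk i = j then |f i| else 0 := fun j => by
      rw [ha]
      exact Finset.sum_filter _ _
    rw [Finset.sum_congr rfl fun j _ => h1 j, Finset.sum_comm, l1norm]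
    apply Finset.sum_congr rfl
    intro i _
    rw [Finset.sum_ite_eq]
    simp [Nat.lt_succ_of_le (hblk_le i)]
  refine ⟨v, ?_, ?_, ?_, ?_⟩
  · funext i
    have h1 := hpt i
    rw [Finset.sum_range_succ'] at h1
    rw [Pi.add_apply, Finset.sum_apply]
    linarith [h1]
  · intro j
    apply isSparse_of_support_subset (S := B j) _ (hcard j)
    intro i hi
    rw [hmemB]
    by_contra hb
    exact hi (by simp [hv, hb])
  · intro j i
    by_cases hb : blk i = j
    · left; simp [hv, hb]
    · right; simp [hv, hb]
  · calc Real.sqrt K' * ∑ j ∈ Finset.range (N / K'), l2norm (v (j + 1))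
        = ∑ j ∈ Finset.range (N / K'), Real.sqrt K' * l2norm (v (j + 1)) := Finset.mul_sum _ _ _
      _ ≤ ∑ j ∈ Finset.range (N / K'), a j := Finset.sum_le_sum fun j _ => hl2blk j
      _ ≤ ∑ j ∈ Finset.range (N / K' + 1), a j :=
          Finset.sum_le_sum_of_subset_of_nonneg
            (Finset.range_subset_range.mpr (Nat.le_succ _)) (fun j _ _ => hanonneg j)
      _ = l1norm f := hatotal

set_option maxHeartbeats 1600000

/-- ℓ2/ℓ1 instance optimality of the ℓ1-fidelity basis pursuit denoise program:
under the ℓ2/ℓ1 RIP at sparsity levels `K'` and `K+K'` with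
`(1/√2) m_{K+K'} − M_{K'} √(K/K') ≥ γ > 0` (implied by `K' > 8 (M_{K'}/m_{K+K'})² K`
with `γ = m_{K+K'}/(2√2)`), any minimizer `xt` of `‖v‖₁` s.t. `‖z − Φv‖₁ ≤ ε`
with `z = Φx + ξ`, `‖ξ‖₁ ≤ ε`, satisfies
`‖x − xt‖₂ ≤ C₀ ‖x − x_K‖₁/√K' + D₀ ε/P` with
`C₀ = 2(√2+1)(M_{K'}/m_{K+K'}) + 2` and `D₀ = 4(√2+1)/m_{K+K'}`. -/
theorem bpdn_l1_instance_optimality (N P K K' : ℕ) (hP : 0 < P)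
    (hKpos : 0 < K) (hK' : 2 * K < K')
    (Φ : (Fin N → ℝ) →ₗ[ℝ] (Fin P → ℂ))
    (mKK' MK' γ : ℝ) (hm : 0 < mKK') (hM : mKK' ≤ MK')
    (hRIP1 : ∀ v : Fin N → ℝ, IsSparse K' v →
      mKK' * l2norm v ≤ (1 / (P : ℝ)) * l1normC (Φ v) ∧
      (1 / (P : ℝ)) * l1normC (Φ v) ≤ MK' * l2norm v)
    (hRIP2 : ∀ v : Fin N → ℝ, IsSparse (K + K') v →
      mKK' * l2norm v ≤ (1 / (P : ℝ)) * l1normC (Φ v) ∧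
      (1 / (P : ℝ)) * l1normC (Φ v) ≤ MK' * l2norm v)
    (hcond : (K' : ℝ) > 8 * (MK' / mKK') ^ 2 * K)
    (hγ : γ = mKK' / (2 * Real.sqrt 2))
    (hγcond : (1 / Real.sqrt 2) * mKK' - MK' * Real.sqrt ((K : ℝ) / K') ≥ γ ∧ γ > 0)
    (x : Fin N → ℝ) (ξ z : Fin P → ℂ) (ε : ℝ)
    (hξ : l1normC ξ ≤ ε) (hz : z = Φ x + ξ)
    (xK : Fin N → ℝ) (hxK : IsSparse K xK)
    (hbest : ∀ v : Fin N → ℝ, IsSparse K v → l1norm (x - xK) ≤ l1norm (x - v))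
    (xt : Fin N → ℝ)
    (hfeas : l1normC (z - Φ xt) ≤ ε)
    (hmin : ∀ v : Fin N → ℝ, l1normC (z - Φ v) ≤ ε → l1norm xt ≤ l1norm v) :
    l2norm (x - xt)
      ≤ (2 * (Real.sqrt 2 + 1) * (MK' / mKK') + 2) * (l1norm (x - xK) / Real.sqrt K')
        + (4 * (Real.sqrt 2 + 1) / mKK') * (ε / P) := by
  classical
  have hK'pos : 0 < K' := lt_of_le_of_lt (Nat.zero_le _) hK'
  have hK'R : (0 : ℝ) < K' := by exact_mod_cast hK'pos
  have hPR : (0 : ℝ) < P := by exact_mod_cast hP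
  have hMpos : 0 < MK' := lt_of_lt_of_le hm hM
  -- basic numeric facts about √2
  set s : ℝ := Real.sqrt 2 with hs_def
  have hs2 : s ^ 2 = 2 := Real.sq_sqrt (by norm_num)
  have hs0 : 0 < s := by rw [hs_def]; positivity
  have hs1 : 1 ≤ s := by nlinarith
  have hs32 : s ≤ 3 / 2 := by nlinarith [sq_nonneg (s - 3 / 2)]
  -- the sorted block decomposition of the off-support part of h
  set h : Fin N → ℝ := xt - x with hh_def
  set T0 : Finset (Fin N) := Finset.univ.filter (fun i => xK i ≠ 0) with hT0_def
  have hmemT0 : ∀ i, i ∈ T0 ↔ xK i ≠ 0 := fun i => by simp [hT0_def]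
  have hT0cardK : T0.card ≤ K := by
    have he : {i | xK i ≠ 0} = (T0 : Set (Fin N)) := by ext i; simp [hT0_def]
    have h1 := hxK
    rwa [IsSparse, he, Set.ncard_coe_finset] at h1
  set h' : Fin N → ℝ := fun i => if i ∈ T0 then 0 else h i with hh'_def
  set h0 : Fin N → ℝ := fun i => if i ∈ T0 then h i else 0 with hh0_def
  obtain ⟨v, hdec, hsp, hpiece, htail⟩ := block_decomposition hK'pos h'
  set nb : ℕ := N / K' with hnb_def
  set sK : ℝ := Real.sqrt K with hsK_def
  set sK' : ℝ := Real.sqrt K' with hsK'_def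
  have hsK'pos : 0 < sK' := by rw [hsK'_def]; exact Real.sqrt_pos.mpr hK'R
  have hsKnn : 0 ≤ sK := by rw [hsK_def]; positivity
  set gvec : Fin N → ℝ := h0 + v 0 with hgvec_def
  set tail2 : ℝ := ∑ j ∈ Finset.range nb, l2norm (v (j + 1)) with htail2_def
  set ρ : ℝ := l1norm h' with hρ_def
  set σ : ℝ := l1norm (x - xK) with hσ_def
  set A : ℝ := l2norm gvec with hA_def
  set L : ℝ := l2norm h with hL_def
  have hA0 : 0 ≤ A := by rw [hA_def]; exact l2norm_nonneg _
  have hσ0 : 0 ≤ σ := Finset.sum_nonneg fun i _ => abs_nonneg _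
  have hε0 : 0 ≤ ε := le_trans (l1normC_nonneg ξ) hξ
  have hE0 : 0 ≤ ε / P := by positivity
  -- spectral-gap facts
  have key0 : MK' * (sK / sK') ≤ mKK' / (2 * s) := by
    have h1 := hγcond.1
    rw [hγ, Real.sqrt_div (by positivity : (0:ℝ) ≤ (K:ℝ))] at h1
    have h2 : 1 / s * mKK' - mKK' / (2 * s) = mKK' / (2 * s) := by
      field_simp
      ring
    rw [← hsK_def, ← hsK'_def] at h1
    linarith
  have key' : 2 * s * (MK' * sK) ≤ mKK' * sK' := by
    have h3 := mul_le_mul_of_nonneg_left key0 (by positivity : (0:ℝ) ≤ 2 * s * sK')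
    have hsK'ne : sK' ≠ 0 := ne_of_gt hsK'pos
    have hsne : s ≠ 0 := ne_of_gt hs0
    have e1 : 2 * s * sK' * (MK' * (sK / sK')) = 2 * s * (MK' * sK) := by
      field_simp
    have e2 : 2 * s * sK' * (mKK' / (2 * s)) = mKK' * sK' := by
      field_simp
    linarith
  have key2' : 2 * s * sK ≤ sK' := by
    have h4 : MK' * (2 * s * sK) ≤ MK' * sK' := by
      calc MK' * (2 * s * sK) = 2 * s * (MK' * sK) := by ring
        _ ≤ mKK' * sK' := key'
        _ ≤ MK' * sK' := mul_le_mul_of_nonneg_right hM (le_of_lt hsK'pos)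
    exact le_of_mul_le_mul_left h4 hMpos
  -- decomposition of h
  have hsplit : h = h0 + h' := by
    funext i
    by_cases hi : i ∈ T0 <;> simp [hh0_def, hh'_def, hi]
  have hdecomp : h = gvec + ∑ j ∈ Finset.range nb, v (j + 1) := by
    rw [hgvec_def, hsplit, hdec, add_assoc]
  -- cone constraint
  have hminx : l1norm xt ≤ l1norm x := hmin x (by rw [hz]; simpa using hξ)
  have hρeq : ρ = ∑ i ∈ T0ᶜ, |h i| := by
    rw [hρ_def]
    have hsum : l1norm h' = ∑ i ∈ T0, |h' i| + ∑ i ∈ T0ᶜ, |h' i| :=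
      (Finset.sum_add_sum_compl T0 _).symm
    have z1 : ∑ i ∈ T0, |h' i| = 0 :=
      Finset.sum_eq_zero fun i hi => by simp [hh'_def, hi]
    have z2 : ∑ i ∈ T0ᶜ, |h' i| = ∑ i ∈ T0ᶜ, |h i| :=
      Finset.sum_congr rfl fun i hi => by simp [hh'_def, Finset.mem_compl.mp hi]
    rw [hsum, z1, z2, zero_add]
  have hxt : ∀ i, xt i = x i + h i := fun i => by simp [hh_def]
  have hcone : ρ ≤ ∑ i ∈ T0, |h i| + 2 * σ := by
    have s1 : ∑ i ∈ T0, |x i| - ∑ i ∈ T0, |h i| ≤ ∑ i ∈ T0, |xt i| := by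
      rw [← Finset.sum_sub_distrib]
      exact Finset.sum_le_sum fun i _ => by rw [hxt i]; exact abs_add_lower (x i) (h i)
    have s2 : ∑ i ∈ T0ᶜ, |h i| - ∑ i ∈ T0ᶜ, |x i| ≤ ∑ i ∈ T0ᶜ, |xt i| := by
      rw [← Finset.sum_sub_distrib]
      exact Finset.sum_le_sum fun i _ => by rw [hxt i]; exact abs_add_lower' (x i) (h i)
    have s3 : ∑ i ∈ T0, |xt i| + ∑ i ∈ T0ᶜ, |xt i| = l1norm xt :=
      Finset.sum_add_sum_compl T0 _
    have s4 : ∑ i ∈ T0, |x i| + ∑ i ∈ T0ᶜ, |x i| = l1norm x :=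
      Finset.sum_add_sum_compl T0 _
    have s5 : ∑ i ∈ T0ᶜ, |x i| ≤ σ := by
      have e : ∀ i ∈ T0ᶜ, |x i| = |x i - xK i| := fun i hi => by
        have h1 : ¬xK i ≠ 0 := fun hc => Finset.mem_compl.mp hi ((hmemT0 i).mpr hc)
        rw [not_not.mp h1, sub_zero]
      calc ∑ i ∈ T0ᶜ, |x i| = ∑ i ∈ T0ᶜ, |x i - xK i| := Finset.sum_congr rfl e
        _ ≤ ∑ i, |x i - xK i| :=
            Finset.sum_le_sum_of_subset_of_nonneg (Finset.subset_univ _)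
              fun _ _ _ => abs_nonneg _
        _ = σ := by rw [hσ_def]; simp [l1norm]
    rw [hρeq]
    linarith
  -- ℓ1 bound on T0 via Cauchy-Schwarz
  have t2 : ∑ i, h0 i ^ 2 = ∑ i ∈ T0, h i ^ 2 := by
    have hsum : ∑ i, h0 i ^ 2 = ∑ i ∈ T0, h0 i ^ 2 + ∑ i ∈ T0ᶜ, h0 i ^ 2 :=
      (Finset.sum_add_sum_compl T0 _).symm
    have z1 : ∑ i ∈ T0ᶜ, h0 i ^ 2 = 0 :=
      Finset.sum_eq_zero fun i hi => by simp [hh0_def, Finset.mem_compl.mp hi]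
    have z2 : ∑ i ∈ T0, h0 i ^ 2 = ∑ i ∈ T0, h i ^ 2 :=
      Finset.sum_congr rfl fun i hi => by simp [hh0_def, hi]
    rw [hsum, z1, z2, add_zero]
  have t3 : Real.sqrt (∑ i ∈ T0, h i ^ 2) ≤ A := by
    rw [← t2, hA_def]
    simp only [l2norm]
    apply Real.sqrt_le_sqrt
    apply Finset.sum_le_sum
    intro i _
    by_cases hi : i ∈ T0
    · have hv0 : v 0 i = 0 := by
        rcases hpiece 0 i with hc | hc
        · rw [hc]; simp [hh'_def, hi]
        · exact hc
      have hgi : gvec i = h0 i := by simp [hgvec_def, hv0]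
      rw [hgi]
    · have hzi : h0 i = 0 := by simp [hh0_def, hi]
      rw [hzi]
      simpa using sq_nonneg (gvec i)
  have sumT0 : ∑ i ∈ T0, |h i| ≤ sK * A := by
    have t1 := sum_abs_le_sqrt_card T0 h
    have t4 : Real.sqrt (T0.card : ℝ) ≤ sK := by
      rw [hsK_def]
      exact Real.sqrt_le_sqrt (by exact_mod_cast hT0cardK)
    calc ∑ i ∈ T0, |h i| ≤ Real.sqrt T0.card * Real.sqrt (∑ i ∈ T0, h i ^ 2) := t1
      _ ≤ sK * A := mul_le_mul t4 t3 (Real.sqrt_nonneg _) hsKnn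
  have hconeF : ρ ≤ sK * A + 2 * σ := by linarith
  -- feasibility: ‖Φ h‖₁ ≤ 2ε
  have hΦh : l1normC (Φ h) ≤ 2 * ε := by
    have hΦhe : Φ h = (z - Φ x) - (z - Φ xt) := by
      rw [hh_def, map_sub]
      abel
    rw [hΦhe]
    calc l1normC ((z - Φ x) - (z - Φ xt))
        ≤ l1normC (z - Φ x) + l1normC (z - Φ xt) := l1normC_sub_le _ _
      _ ≤ ε + ε := add_le_add (by rw [hz]; simpa using hξ) hfeas
      _ = 2 * ε := by ring
  -- sparsity of gvec
  have hgs : IsSparse (K + K') gvec := by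
    have hsub : {i | gvec i ≠ 0} ⊆ {i | h0 i ≠ 0} ∪ {i | v 0 i ≠ 0} := by
      intro i hi
      simp only [Set.mem_setOf_eq, Set.mem_union]
      by_contra hc
      push_neg at hc
      exact hi (by simp [hgvec_def, hc.1, hc.2])
    have h1 : {i | h0 i ≠ 0}.ncard ≤ K := by
      refine le_trans (le_trans (Set.ncard_le_ncard ?_ T0.finite_toSet) ?_) hT0cardK
      · intro i hi
        simp only [Set.mem_setOf_eq] at hi
        by_contra hmem
        have hmem' : i ∉ T0 := fun hc => hmem (Finset.mem_coe.mpr hc)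
        exact hi (by simp [hh0_def, hmem'])
      · rw [Set.ncard_coe_finset]
    calc {i | gvec i ≠ 0}.ncard
        ≤ ({i | h0 i ≠ 0} ∪ {i | v 0 i ≠ 0}).ncard :=
          Set.ncard_le_ncard hsub (Set.toFinite _)
      _ ≤ {i | h0 i ≠ 0}.ncard + {i | v 0 i ≠ 0}.ncard := Set.ncard_union_le _ _
      _ ≤ K + K' := add_le_add h1 (hsp 0)
  -- RIP chain
  have c1 := (hRIP2 gvec hgs).1
  have hΦdec : Φ h = Φ gvec + ∑ j ∈ Finset.range nb, Φ (v (j + 1)) := by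
    rw [hdecomp, map_add, map_sum]
  have c2 : l1normC (Φ gvec)
      ≤ l1normC (Φ h) + ∑ j ∈ Finset.range nb, l1normC (Φ (v (j + 1))) := by
    have he : Φ gvec = Φ h - ∑ j ∈ Finset.range nb, Φ (v (j + 1)) := by
      rw [hΦdec]; abel
    rw [he]
    exact le_trans (l1normC_sub_le _ _) (add_le_add le_rfl (l1normC_sum_le _ _))
  have f1 : mKK' * A ≤ 2 * (ε / P) + MK' * tail2 := by
    have c3a := mul_le_mul_of_nonneg_left c2 (by positivity : (0:ℝ) ≤ 1 / (P : ℝ))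
    rw [mul_add, Finset.mul_sum] at c3a
    have c4 : ∑ j ∈ Finset.range nb, 1 / (P : ℝ) * l1normC (Φ (v (j + 1)))
        ≤ ∑ j ∈ Finset.range nb, MK' * l2norm (v (j + 1)) :=
      Finset.sum_le_sum fun j _ => (hRIP1 _ (hsp (j + 1))).2
    have c5 : ∑ j ∈ Finset.range nb, MK' * l2norm (v (j + 1)) = MK' * tail2 := by
      rw [htail2_def, Finset.mul_sum]
    have c6 : 1 / (P : ℝ) * l1normC (Φ h) ≤ 1 / (P : ℝ) * (2 * ε) :=
      mul_le_mul_of_nonneg_left hΦh (by positivity)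
    have c7 : 1 / (P : ℝ) * (2 * ε) = 2 * (ε / P) := by ring
    linarith
  -- ℓ2 triangle inequality
  have ftri : L ≤ A + tail2 := by
    rw [hL_def, hA_def, htail2_def, hdecomp]
    exact le_trans (l2norm_add_le _ _) (add_le_add le_rfl (l2norm_sum_le _ _))
  -- assemble scaled inequalities
  clear_value s sK sK' h T0 h' h0 gvec tail2 ρ σ A L
  have i1 := mul_le_mul_of_nonneg_left f1 (le_of_lt hsK'pos)
  have i2 : MK' * (sK' * tail2) ≤ MK' * ρ := mul_le_mul_of_nonneg_left htail hMpos.le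
  have i3 : MK' * ρ ≤ MK' * (sK * A + 2 * σ) := mul_le_mul_of_nonneg_left hconeF hMpos.le
  have j1 : sK' * (mKK' * A) ≤ sK' * (2 * (ε / P)) + MK' * (sK * A) + 2 * (MK' * σ) := by
    linarith [i1, i2, i3]
  have j2 := mul_le_mul_of_nonneg_left j1 (by positivity : (0:ℝ) ≤ 2 * s)
  have i4 : 2 * s * (MK' * sK) * A ≤ mKK' * sK' * A := mul_le_mul_of_nonneg_right key' hA0
  have H1 : mKK' * (2 * s - 1) * (A * sK') ≤ 4 * s * (ε / P * sK') + 4 * s * (MK' * σ) := by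
    linarith [j2, i4]
  have k1 := mul_le_mul_of_nonneg_left ftri hsK'pos.le
  have j3 : L * sK' ≤ A * sK' + sK * A + 2 * σ := by linarith [k1, htail, hconeF]
  have j4 := mul_le_mul_of_nonneg_left j3 (by positivity : (0:ℝ) ≤ 2 * s)
  have i5 : 2 * s * sK * A ≤ sK' * A := mul_le_mul_of_nonneg_right key2' hA0
  have H2 : 2 * s * (L * sK') ≤ (2 * s + 1) * (A * sK') + 4 * s * σ := by linarith [j4, i5]
  -- combine and eliminate A
  have h8 : (0:ℝ) < 8 - 2 * s := by linarith
  have hpos1 : (0:ℝ) ≤ mKK' * (2 * s - 1) := mul_nonneg hm.le (by linarith)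
  have P1 := mul_le_mul_of_nonneg_left H2 hpos1
  have P2 := mul_le_mul_of_nonneg_left H1 (by linarith : (0:ℝ) ≤ 2 * s + 1)
  have P3 : mKK' * (2 * s - 1) * (2 * s * (L * sK'))
      ≤ (2 * s + 1) * (4 * s * (ε / P * sK') + 4 * s * (MK' * σ))
        + mKK' * (2 * s - 1) * (4 * s * σ) := by linarith [P1, P2]
  have e1 : s ^ 2 * (mKK' * (L * sK')) = 2 * (mKK' * (L * sK')) := by rw [hs2]
  have e2 : s ^ 2 * (ε / P * sK') = 2 * (ε / P * sK') := by rw [hs2]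
  have e3 : s ^ 2 * (MK' * σ) = 2 * (MK' * σ) := by rw [hs2]
  have e4 : s ^ 2 * (mKK' * σ) = 2 * (mKK' * σ) := by rw [hs2]
  have e5 : 0 ≤ (s - 1) * (MK' * σ) := mul_nonneg (by linarith) (mul_nonneg hMpos.le hσ0)
  have e6 : 0 ≤ s * (ε / P * sK') := mul_nonneg hs0.le (mul_nonneg hE0 hsK'pos.le)
  have goalscaled : (8 - 2 * s) * (mKK' * sK' * L)
      ≤ (8 - 2 * s) * ((2 * (s + 1) * MK' + 2 * mKK') * σ + 4 * (s + 1) * (ε / P * sK')) := by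
    linarith [P3, e1, e2, e3, e4, e5, e6]
  have hgoal2 : mKK' * sK' * L
      ≤ (2 * (s + 1) * MK' + 2 * mKK') * σ + 4 * (s + 1) * (ε / P * sK') :=
    le_of_mul_le_mul_left goalscaled h8
  -- conclude
  have hLxxt : l2norm (x - xt) = L := by
    rw [hL_def]
    simp only [l2norm]
    congr 1
    apply Finset.sum_congr rfl
    intro i _
    have he : (x - xt) i = -(h i) := by simp [hh_def]
    rw [he, neg_sq]
  rw [hLxxt]
  have hmsk : (0:ℝ) < mKK' * sK' := mul_pos hm hsK'pos
  have hPne : (P : ℝ) ≠ 0 := ne_of_gt hPR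
  have hmne : mKK' ≠ 0 := ne_of_gt hm
  have hsK'ne : sK' ≠ 0 := ne_of_gt hsK'pos
  have hrw : (2 * (s + 1) * (MK' / mKK') + 2) * (σ / sK') + 4 * (s + 1) / mKK' * (ε / P)
      = ((2 * (s + 1) * MK' + 2 * mKK') * σ + 4 * (s + 1) * (ε / P * sK')) / (mKK' * sK') := by
    field_simp
  rw [hrw, le_div_iff₀ hmsk]
  linarith [hgoal2]

end
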